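/- For every n, the space ℝ^{n×n} is the direct sum of S_n (semimagic matrices with some weight) and V_n (matrices with the vertex cross sum property M_{i,j}+M_{k,l}=M_{i,l}+M_{k,j} and total entry sum 0): S_n ∩ V_n = {0} and S_n + V_n = ℝ^{n×n}. -/

import Mathlib

def IsSemimagic {n : ℕ} (M : Matrix (Fin n) (Fin n) ℝ) : Prop :=
  ∃ w : ℝ, (∀ i, ∑ j, M i j = n * w) ∧ (∀ i, ∑ j, M j i = n * w)

def IsVertexCross0 {n : ℕ} (M : Matrix (Fin n) (Fin n) ℝ) : Prop :=
  (∀ i j k l : Fin n, M i j + M k l = M i l + M k j) ∧ ∑ i, ∑ j, M i j = 0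

theorem stmt_5 (n : ℕ) :
    (∀ M : Matrix (Fin n) (Fin n) ℝ, IsSemimagic M → IsVertexCross0 M → M = 0) ∧
    (∀ M : Matrix (Fin n) (Fin n) ℝ, ∃ A B : Matrix (Fin n) (Fin n) ℝ,
      IsSemimagic A ∧ IsVertexCross0 B ∧ M = A + B) := by
  constructor
  · intro M hS hV
    rcases Nat.eq_zero_or_pos n with hn | hn
    · subst hn; ext i j; exact i.elim0
    · obtain ⟨w, hr, hc⟩ := hS
      obtain ⟨hx, hsum⟩ := hV
      have npos : (0:ℝ) < (n:ℝ) := by exact_mod_cast hn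
      set z : Fin n := ⟨0, hn⟩
      have hrow : ∀ i : Fin n, M i z = M z z := by
        intro i
        have h2 : ∑ j, M i j = ∑ j, M z j + n * (M i z - M z z) := by
          have h1 : ∀ j ∈ Finset.univ, M i j = M z j + (M i z - M z z) := by
            intro j _; have := hx i j z z; linarith
          rw [Finset.sum_congr rfl h1, Finset.sum_add_distrib, Finset.sum_const,
            Finset.card_univ, Fintype.card_fin, nsmul_eq_mul]
        rw [hr i, hr z] at h2
        nlinarith [sq_nonneg (M i z - M z z)]
      have hcol : ∀ j : Fin n, M z j = M z z := by
        intro j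
        have h2 : ∑ i, M i j = ∑ i, M i z + n * (M z j - M z z) := by
          have h1 : ∀ i ∈ Finset.univ, M i j = M i z + (M z j - M z z) := by
            intro i _; have := hx i j z z; linarith
          rw [Finset.sum_congr rfl h1, Finset.sum_add_distrib, Finset.sum_const,
            Finset.card_univ, Fintype.card_fin, nsmul_eq_mul]
        rw [hc j, hc z] at h2
        nlinarith [sq_nonneg (M z j - M z z)]
      have hconst : ∀ i j, M i j = M z z := by
        intro i j
        have := hx i j z z
        rw [hrow i, hcol j] at this
        linarith
      have hsum2 : ∑ i : Fin n, ∑ j : Fin n, M i j = (n:ℝ) * ((n:ℝ) * M z z) := by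
        rw [Finset.sum_congr rfl (fun i _ => ?_)]
        · rw [Finset.sum_const, Finset.card_univ, Fintype.card_fin, nsmul_eq_mul]
        · rw [Finset.sum_congr rfl (fun j _ => hconst i j), Finset.sum_const,
            Finset.card_univ, Fintype.card_fin, nsmul_eq_mul]
      rw [hsum] at hsum2
      have hne : (n:ℝ) ≠ 0 := ne_of_gt npos
      have hz : M z z = 0 := by
        rcases mul_eq_zero.1 hsum2.symm with h | h
        · exact absurd h hne
        · rcases mul_eq_zero.1 h with h' | h'
          · exact absurd h' hne
          · exact h'
      ext i j
      simp [hconst i j, hz]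
  · intro M
    rcases Nat.eq_zero_or_pos n with hn | hn
    · subst hn
      refine ⟨M, 0, ⟨0, fun i => i.elim0, fun i => i.elim0⟩, ⟨fun i => i.elim0, by simp⟩, by simp⟩
    · have npos : (0:ℝ) < (n:ℝ) := by exact_mod_cast hn
      have hne : (n:ℝ) ≠ 0 := ne_of_gt npos
      set s : ℝ := ∑ i, ∑ j, M i j with hs
      set B : Matrix (Fin n) (Fin n) ℝ :=
        fun i j => (∑ k, M i k) / n + (∑ k, M k j) / n - 2 * s / n ^ 2 with hB
      have hsum_col : ∑ j : Fin n, ∑ k : Fin n, M k j = s := by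
        rw [hs, Finset.sum_comm]
      have hBrow : ∀ i : Fin n, ∑ j, B i j = (∑ k, M i k) + s / n - 2 * s / n := by
        intro i
        simp only [hB]
        rw [Finset.sum_sub_distrib, Finset.sum_add_distrib, Finset.sum_const,
          Finset.card_univ, Fintype.card_fin, nsmul_eq_mul, ← Finset.sum_div, hsum_col]
        simp only [Finset.sum_const, Finset.card_univ, Fintype.card_fin, nsmul_eq_mul]
        field_simp
      have hBcol : ∀ j : Fin n, ∑ i, B i j = s / n + (∑ k, M k j) - 2 * s / n := by
        intro j
        have h : ∑ i, B i j = (∑ i, ∑ k, M i k) / n + (n:ℝ) * ((∑ k, M k j) / n)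
            - (n:ℝ) * (2 * s / n ^ 2) := by
          simp only [hB]
          rw [Finset.sum_sub_distrib, Finset.sum_add_distrib, ← Finset.sum_div,
            Finset.sum_const, Finset.sum_const, Finset.card_univ, Fintype.card_fin,
            nsmul_eq_mul, nsmul_eq_mul]
        rw [h, ← hs]
        field_simp
      refine ⟨M - B, B, ⟨s / n ^ 2, ?_, ?_⟩, ⟨?_, ?_⟩, by ext i j; simp⟩
      · intro i
        have h : ∑ j, (M - B) i j = ∑ j, M i j - ∑ j, B i j := by
          simp [Finset.sum_sub_distrib]
        rw [h, hBrow i]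
        field_simp
        ring
      · intro j
        have : ∑ i, (M - B) i j = ∑ i, M i j - ∑ i, B i j := by
          simp [Finset.sum_sub_distrib]
        rw [this, hBcol j]
        field_simp
        ring
      · intro i j k l
        simp only [hB]; ring
      · have : ∑ i : Fin n, ∑ j : Fin n, B i j =
            ∑ i : Fin n, ((∑ k, M i k) + s / n - 2 * s / n) := by
          exact Finset.sum_congr rfl fun i _ => hBrow i
        rw [this, Finset.sum_sub_distrib, Finset.sum_add_distrib, Finset.sum_const,
          Finset.sum_const, Finset.card_univ, Fintype.card_fin, nsmul_eq_mul, nsmul_eq_mul,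
          ← hs]
        field_simp
        ring
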